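/- Let (X,G) be a chain mixing free semigroup action and k ∈ ℕ. Then (X,G^k) is chain mixing, and for all 0 < ε < δ: (1) m_ε(δ,G^k) ≥ (1/k)·m_ε(δ,G); and (2) there exists ε' ≤ ε such that m_ε(δ,G^k) ≤ m_{ε'}(δ,G). -/

import Mathlib

open Metric Filter Set
open scoped Classical

noncomputable section

variable {X : Type*} [MetricSpace X] {Y : Type*} [MetricSpace Y] {ι κ : Type*}

/-- `c` satisfies the `(w, δ)`-chain condition along the word `w`. -/
def IsChainSeq (f : ι → X → X) (w : List ι) (δ : ℝ) (c : ℕ → X) : Prop :=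
  ∀ (j : ℕ) (h : j < w.length), dist (f (w.get ⟨j, h⟩) (c j)) (c (j + 1)) ≤ δ

/-- There is a `(w, δ)`-chain from `a` to `b` with `|w| = n`. -/
def ChainFrom (f : ι → X → X) (δ : ℝ) (a b : X) (n : ℕ) : Prop :=
  ∃ w : List ι, w.length = n ∧ ∃ c : ℕ → X, IsChainSeq f w δ c ∧ c 0 = a ∧ c n = b

/-- `x` is a chain recurrent point of the action generated by `f`. -/
def ChainRecurrentPt (f : ι → X → X) (x : X) : Prop :=
  ∀ ε : ℝ, 0 < ε → ∃ n : ℕ, 0 < n ∧ ChainFrom f ε x x n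

/-- The action generated by `f` is chain recurrent. -/
def ChainRecurrent (f : ι → X → X) : Prop := ∀ x : X, ChainRecurrentPt f x

/-- The action generated by `f` is chain transitive. -/
def ChainTransitive (f : ι → X → X) : Prop :=
  ∀ ε : ℝ, 0 < ε → ∀ a b : X, ∃ n : ℕ, 0 < n ∧ ChainFrom f ε a b n

/-- The action generated by `f` is chain mixing. -/
def ChainMixing (f : ι → X → X) : Prop :=
  ∀ ε : ℝ, 0 < ε → ∃ N : ℕ, 0 < N ∧ ∀ a b : X, ∀ n : ℕ, N ≤ n → ChainFrom f ε a b n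

/-- The `ε`-chain recurrence time `r_ε(x, G)`. -/
def rTime (f : ι → X → X) (ε : ℝ) (x : X) : ℕ :=
  sInf {n : ℕ | 0 < n ∧ ChainFrom f ε x x n}

/-- `r_ε(G) = max_x r_ε(x, G)`. -/
def rTimeSup (f : ι → X → X) (ε : ℝ) : ℕ :=
  sSup (Set.range fun x : X => rTime f ε x)

/-- The chain mixing time `m_ε(x, δ, G)`. -/
def mTime (f : ι → X → X) (ε δ : ℝ) (x : X) : ℕ :=
  sInf {N : ℕ | ∀ n : ℕ, N ≤ n → ∀ y : X, ∃ z : X, dist z x < δ ∧ ChainFrom f ε z y n}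

/-- `m_ε(δ, G) = max_x m_ε(x, δ, G)`. -/
def mTimeSup (f : ι → X → X) (ε δ : ℝ) : ℕ :=
  sSup (Set.range fun x : X => mTime f ε δ x)

/-- `f_w = f_{i₀} ∘ f_{i₁} ∘ ⋯ ∘ f_{i_{k-1}}` applied to `x`. -/
def applyWord (f : ι → X → X) (w : List ι) (x : X) : X := w.foldr f x

/-- The generators of `G^k`, indexed by the words of length `k`. -/
def powerGens (f : ι → X → X) (k : ℕ) : (Fin k → ι) → X → X :=
  fun u => applyWord f (List.ofFn u)

/-- The generators `f_j × g_k` of the product action `G × H`. -/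
def prodGens (f : ι → X → X) (g : κ → Y → Y) : ι × κ → X × Y → X × Y :=
  fun p z => (f p.1 z.1, g p.2 z.2)

/-- `T_ε(x)`: the set of lengths of `(w, ε)`-chains from `x` to itself. -/
def Tset (f : ι → X → X) (ε : ℝ) (x : X) : Set ℕ :=
  {n : ℕ | 0 < n ∧ ChainFrom f ε x x n}

/-- `k = gcd T` for a set `T ⊆ ℕ`. -/
def IsGCDOf (T : Set ℕ) (k : ℕ) : Prop :=
  (∀ t ∈ T, k ∣ t) ∧ ∀ d : ℕ, (∀ t ∈ T, d ∣ t) → d ∣ k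

/-- `x ∼_ε y`: there is an `(w, ε)`-chain from `x` to `y` whose length is a multiple of `k`. -/
def RelEps (f : ι → X → X) (ε : ℝ) (k : ℕ) (x y : X) : Prop :=
  ∃ n : ℕ, 0 < n ∧ k ∣ n ∧ ChainFrom f ε x y n

/-- The orbit segment: the first `j` letters of `w` applied, in order, to `x`. -/
def orbitSeg (f : ι → X → X) (w : List ι) (x : X) (j : ℕ) : X :=
  (w.take j).foldl (fun y i => f i y) x

/-- The Bowen-type word metric `d_w`. -/
def wordDist (f : ι → X → X) (w : List ι) (x y : X) : ℝ :=
  ⨆ j : Fin (w.length + 1), dist (orbitSeg f w x (j : ℕ)) (orbitSeg f w y (j : ℕ))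

/-- `N(w, ε, G)`: maximal cardinality of a `(w, ε, G)`-separated subset of `X`. -/
def sepMax (f : ι → X → X) (w : List ι) (ε : ℝ) : ℕ :=
  sSup {k : ℕ | ∃ K : Finset X,
    (∀ x ∈ K, ∀ y ∈ K, x ≠ y → ε ≤ wordDist f w x y) ∧ K.card = k}

/-- Bufetov's topological entropy `h(G)` of a free semigroup action. -/
def topEntropy {m : ℕ} (f : Fin m → X → X) : ℝ :=
  ⨆ ε : {e : ℝ // 0 < e},
    Filter.limsup (fun n : ℕ =>
      Real.log ((∑ w : Fin n → Fin m, (sepMax f (List.ofFn w) ε.1 : ℝ)) / (m : ℝ) ^ n) / (n : ℝ))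
      Filter.atTop

/-- `N*(w, ε, δ, G)`: maximal cardinality of a `(w, ε, δ, G)`-pseudo-separated set. -/
def pseudoSepMax (f : ι → X → X) (w : List ι) (ε δ : ℝ) : ℕ :=
  sSup {k : ℕ | ∃ K : Finset (ℕ → X),
    (∀ c ∈ K, IsChainSeq f w δ c) ∧
    (∀ c ∈ K, ∀ c' ∈ K, c ≠ c' → ∃ j : ℕ, j < w.length ∧ ε < dist (c j) (c' j)) ∧
    K.card = k}

/-- `B*(w, ε, δ, G)`: minimal cardinality of a `(w, ε, δ, G)`-pseudo-spanning set. -/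
def pseudoSpanMin (f : ι → X → X) (w : List ι) (ε δ : ℝ) : ℕ :=
  sInf {k : ℕ | ∃ K : Finset (ℕ → X),
    (∀ c ∈ K, IsChainSeq f w δ c) ∧
    (∀ c : ℕ → X, IsChainSeq f w δ c →
      ∃ c' ∈ K, ∀ j : ℕ, j < w.length → dist (c j) (c' j) ≤ ε) ∧
    K.card = k}

/-- The pseudo-entropy `h*(G)` of a free semigroup action. -/
def pseudoEntropy {m : ℕ} (f : Fin m → X → X) : ℝ :=
  ⨆ ε : {e : ℝ // 0 < e}, ⨅ δ : {d : ℝ // 0 < d},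
    Filter.limsup (fun n : ℕ =>
      Real.log ((∑ w : Fin n → Fin m, (pseudoSepMax f (List.ofFn w) ε.1 δ.1 : ℝ)) / (m : ℝ) ^ n)
        / (n : ℝ)) Filter.atTop

/-- The metric `d'(ω, ω') = m^{-k}`, `k = inf {n | ωₙ ≠ ω'ₙ}`, on `Σ_m^+ = ℕ → Fin m`. -/
def sigmaDist (m : ℕ) (ω ω' : ℕ → Fin m) : ℝ :=
  if h : ∃ n : ℕ, ω n ≠ ω' n then (1 / (m : ℝ)) ^ Nat.find h else 0

/-- The metric `D = max {d', d}` on `Σ_m^+ × X`. -/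
def skewDist (m : ℕ) (p q : (ℕ → Fin m) × X) : ℝ :=
  max (sigmaDist m p.1 q.1) (dist p.2 q.2)

/-- The skew-product transformation `F(ω, x) = (σ ω, f_{ω 0} x)`. -/
def skewMap {m : ℕ} (f : Fin m → X → X) : (ℕ → Fin m) × X → (ℕ → Fin m) × X :=
  fun p => (fun n => p.1 (n + 1), f (p.1 0) p.2)

/-- `c` is a `δ`-pseudo-orbit of length `n + 1` of the single map `F`,
w.r.t. the distance function `D`. -/
def IsPseudoOrbit {Z : Type*} (D : Z → Z → ℝ) (F : Z → Z) (n : ℕ) (δ : ℝ) (c : ℕ → Z) : Prop :=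
  ∀ j : ℕ, j < n → D (F (c j)) (c (j + 1)) ≤ δ

/-- `N*(n, ε, δ, F)` for a single map `F` w.r.t. a distance function `D`. -/
def pseudoSepMaxMap {Z : Type*} (D : Z → Z → ℝ) (F : Z → Z) (n : ℕ) (ε δ : ℝ) : ℕ :=
  sSup {k : ℕ | ∃ K : Finset (ℕ → Z),
    (∀ c ∈ K, IsPseudoOrbit D F n δ c) ∧
    (∀ c ∈ K, ∀ c' ∈ K, c ≠ c' → ∃ j : ℕ, j < n ∧ ε < D (c j) (c' j)) ∧
    K.card = k}

/-- `B*(n, ε, δ, F)` for a single map `F` w.r.t. a distance function `D`. -/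
def pseudoSpanMinMap {Z : Type*} (D : Z → Z → ℝ) (F : Z → Z) (n : ℕ) (ε δ : ℝ) : ℕ :=
  sInf {k : ℕ | ∃ K : Finset (ℕ → Z),
    (∀ c ∈ K, IsPseudoOrbit D F n δ c) ∧
    (∀ c : ℕ → Z, IsPseudoOrbit D F n δ c →
      ∃ c' ∈ K, ∀ j : ℕ, j ≤ n → D (c j) (c' j) ≤ ε) ∧
    K.card = k}

/-- The pseudo-entropy `h*(F)` of a single map `F` w.r.t. a distance function `D`. -/
def pseudoEntropyMap {Z : Type*} (D : Z → Z → ℝ) (F : Z → Z) : ℝ :=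
  ⨆ ε : {e : ℝ // 0 < e}, ⨅ δ : {d : ℝ // 0 < d},
    Filter.limsup (fun n : ℕ =>
      Real.log (pseudoSepMaxMap D F n ε.1 δ.1 : ℝ) / (n : ℝ)) Filter.atTop

/-- An `ε`-chain of length `n` from `a` to `b` for a single map. -/
def ChainFromMap {Z : Type*} (D : Z → Z → ℝ) (F : Z → Z) (δ : ℝ) (a b : Z) (n : ℕ) : Prop :=
  ∃ c : ℕ → Z, IsPseudoOrbit D F n δ c ∧ c 0 = a ∧ c n = b

/-- `r_ε(z, F)` for a single map. -/
def rTimeMap {Z : Type*} (D : Z → Z → ℝ) (F : Z → Z) (ε : ℝ) (z : Z) : ℕ :=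
  sInf {n : ℕ | 0 < n ∧ ChainFromMap D F ε z z n}

/-- `r_ε(F)` for a single map. -/
def rTimeMapSup {Z : Type*} (D : Z → Z → ℝ) (F : Z → Z) (ε : ℝ) : ℕ :=
  sSup (Set.range fun z : Z => rTimeMap D F ε z)

/-- `m_ε(z, δ, F)` for a single map. -/
def mTimeMap {Z : Type*} (D : Z → Z → ℝ) (F : Z → Z) (ε δ : ℝ) (z : Z) : ℕ :=
  sInf {N : ℕ | ∀ n : ℕ, N ≤ n → ∀ y : Z, ∃ z' : Z, D z' z < δ ∧ ChainFromMap D F ε z' y n}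

/-- `m_ε(δ, F)` for a single map. -/
def mTimeMapSup {Z : Type*} (D : Z → Z → ℝ) (F : Z → Z) (ε δ : ℝ) : ℕ :=
  sSup (Set.range fun z : Z => mTimeMap D F ε δ z)

/-- `N_δ(X)`: the smallest number of sets of diameter at most `δ` that cover `X`. -/
def coverNum (X : Type*) [MetricSpace X] (δ : ℝ) : ℕ :=
  sInf {k : ℕ | ∃ S : Finset (Set X),
    (∀ s ∈ S, Metric.diam s ≤ δ) ∧ (⋃ s ∈ S, s) = Set.univ ∧ S.card = k}

/-- The upper box dimension of `X`. -/
def upperBoxDim (X : Type*) [MetricSpace X] : ℝ :=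
  Filter.limsup (fun δ : ℝ => Real.log (coverNum X δ : ℝ) / (-Real.log δ))
    (nhdsWithin 0 (Set.Ioi 0))

/-- The lower box dimension of `X`. -/
def lowerBoxDim (X : Type*) [MetricSpace X] : ℝ :=
  Filter.liminf (fun δ : ℝ => Real.log (coverNum X δ : ℝ) / (-Real.log δ))
    (nhdsWithin 0 (Set.Ioi 0))

end

section Aux

variable {X : Type*} [MetricSpace X] {ι : Type*}

lemma applyWord_nil (f : ι → X → X) (x : X) : applyWord f [] x = x := rfl

lemma applyWord_cons (f : ι → X → X) (i : ι) (w : List ι) (x : X) :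
    applyWord f (i :: w) x = f i (applyWord f w x) := rfl

lemma applyWord_append (f : ι → X → X) (v w : List ι) (x : X) :
    applyWord f (v ++ w) x = applyWord f v (applyWord f w x) :=
  List.foldr_append

/-- Trivial chain of length 0. -/
lemma chainFrom_zero (f : ι → X → X) (ε : ℝ) (a : X) : ChainFrom f ε a a 0 :=
  ⟨[], rfl, fun _ => a, fun j h => absurd h (by simp), rfl, rfl⟩

lemma eq_of_chainFrom_zero {f : ι → X → X} {ε : ℝ} {a b : X}
    (h : ChainFrom f ε a b 0) : a = b := by
  obtain ⟨w, hw, c, _, h0, h1⟩ := h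
  rw [← h0, ← h1]

/-- Concatenation of chains. -/
lemma chainFrom_trans {f : ι → X → X} {ε : ℝ} {a b y : X} {n r : ℕ}
    (h₁ : ChainFrom f ε a b n) (h₂ : ChainFrom f ε b y r) :
    ChainFrom f ε a y (n + r) := by
  obtain ⟨w₁, hw₁, c₁, hc₁, hc₁0, hc₁n⟩ := h₁
  obtain ⟨w₂, hw₂, c₂, hc₂, hc₂0, hc₂r⟩ := h₂
  refine ⟨w₁ ++ w₂, by simp [hw₁, hw₂], fun j => if j < n then c₁ j else c₂ (j - n),
    ?_, ?_, ?_⟩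
  · intro j hj
    have hjlen : j < n + r := by simpa [hw₁, hw₂] using hj
    simp only [List.get_eq_getElem]
    by_cases hjn : j < n
    · rw [List.getElem_append_left (show j < w₁.length by omega)]
      have hstep := hc₁ j (by omega)
      simp only [List.get_eq_getElem] at hstep
      by_cases hj1 : j + 1 < n
      · simpa [hjn, hj1] using hstep
      · have hj1n : j + 1 = n := by omega
        have hb : c₂ (j + 1 - n) = c₁ (j + 1) := by
          rw [hj1n, Nat.sub_self, hc₂0, ← hc₁n]
        simp only [if_pos hjn, if_neg hj1]
        rw [hb]
        exact hstep
    · rw [List.getElem_append_right (show w₁.length ≤ j by omega)]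
      have hstep := hc₂ (j - n) (by omega)
      simp only [List.get_eq_getElem] at hstep
      simp only [if_neg hjn, if_neg (show ¬ j + 1 < n by omega), hw₁]
      have e2 : j + 1 - n = (j - n) + 1 := by omega
      rw [e2]
      exact hstep
  · show (if 0 < n then c₁ 0 else c₂ (0 - n)) = a
    by_cases hn : 0 < n
    · simp only [if_pos hn]; exact hc₁0
    · have hn0 : n = 0 := by omega
      subst hn0
      rw [if_neg (by omega), Nat.sub_zero, hc₂0, ← hc₁n, hc₁0]
  · show (if n + r < n then c₁ (n + r) else c₂ (n + r - n)) = y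
    rw [if_neg (by omega), Nat.add_sub_cancel_left]
    exact hc₂r

/-- Splitting a chain. -/
lemma chainFrom_split {f : ι → X → X} {ε : ℝ} {a b : X} {n r : ℕ}
    (h : ChainFrom f ε a b (n + r)) :
    ∃ mid : X, ChainFrom f ε a mid n ∧ ChainFrom f ε mid b r := by
  obtain ⟨w, hw, c, hc, hc0, hcn⟩ := h
  refine ⟨c n, ⟨w.take n, by rw [List.length_take, hw]; omega, c, ?_, hc0, rfl⟩,
    ⟨w.drop n, by rw [List.length_drop, hw]; omega, fun j => c (n + j), ?_, by simp,
      by simpa using hcn⟩⟩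
  · intro j hj
    have hjw : j < w.length := by rw [List.length_take, hw] at hj; omega
    simp only [List.get_eq_getElem, List.getElem_take]
    have hstep := hc j hjw
    simp only [List.get_eq_getElem] at hstep
    exact hstep
  · intro j hj
    rw [List.length_drop, hw] at hj
    simp only [List.get_eq_getElem, List.getElem_drop]
    have hstep := hc (n + j) (by omega)
    simp only [List.get_eq_getElem] at hstep
    exact hstep

/-- Suffix of a chain. -/
lemma chainFrom_suffix {f : ι → X → X} {ε : ℝ} {a b : X} {n r : ℕ} (hr : r ≤ n)
    (h : ChainFrom f ε a b n) : ∃ v : X, ChainFrom f ε v b r := by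
  have : n = (n - r) + r := by omega
  rw [this] at h
  obtain ⟨mid, _, h2⟩ := chainFrom_split h
  exact ⟨mid, h2⟩

/-- Exact orbit gives a chain: one block step. -/
lemma chainFrom_of_applyWord (f : ι → X → X) {ε : ℝ} (hε : 0 ≤ ε) (v : List ι)
    (hv : 0 < v.length) {a b : X} (h : dist (applyWord f v a) b ≤ ε) :
    ChainFrom f ε a b v.length := by
  set L := v.length with hL
  refine ⟨v.reverse, by simp [hL], fun j => if j < L then applyWord f (v.drop (L - j)) a else b,
    ?_, ?_, ?_⟩
  case refine_2 =>
    show (if 0 < L then applyWord f (v.drop (L - 0)) a else b) = a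
    rw [if_pos hv, Nat.sub_zero, hL, List.drop_length]
    rfl
  case refine_3 =>
    show (if L < L then applyWord f (v.drop (L - L)) a else b) = b
    rw [if_neg (lt_irrefl L)]
  intro j hj
  rw [List.length_reverse] at hj
  simp only [List.get_eq_getElem, List.getElem_reverse, List.length_reverse]
  rw [if_pos hj]
  have hkey : v.drop (L - j - 1) = v[L - j - 1]'(by omega) :: v.drop (L - j) := by
    have h1 : L - j - 1 < v.length := by omega
    rw [List.drop_eq_getElem_cons h1]
    have e1 : L - j - 1 + 1 = L - j := by omega
    rw [e1]

  by_cases hj1 : j + 1 < L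
  · rw [if_pos hj1]
    have e2 : L - (j + 1) = L - j - 1 := by omega
    have e3 : v[L - 1 - j] = v[L - j - 1]'(by omega) := by
      congr 1; omega
    rw [e2, hkey, applyWord_cons, e3]
    simpa using hε
  · rw [if_neg hj1]
    have e3 : v[L - 1 - j] = v[L - j - 1]'(by omega) := by
      congr 1; omega
    have e : f v[L - 1 - j] (applyWord f (v.drop (L - j)) a) = applyWord f v a := by
      rw [e3]
      have e4 : applyWord f (v.drop (L - j - 1)) a = applyWord f v a := by
        rw [show L - j - 1 = 0 by omega, List.drop_zero]
      rw [← e4, hkey]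
      rfl
    rw [e]
    exact h

end Aux

/-- Uniform continuity of the generators, uniform over the (finitely many) generators. -/
lemma uc1 {X : Type*} [MetricSpace X] [CompactSpace X] {m : ℕ} (f : Fin m → X → X)
    (hf : ∀ i, Continuous (f i)) (ε : ℝ) (hε : 0 < ε) :
    ∃ η, 0 < η ∧ ∀ (i : Fin m) (x y : X), dist x y ≤ η → dist (f i x) (f i y) ≤ ε := by
  have h : ∀ i : Fin m, ∃ η, 0 < η ∧ ∀ x y : X, dist x y ≤ η → dist (f i x) (f i y) ≤ ε := by
    intro i
    have h1 := CompactSpace.uniformContinuous_of_continuous (hf i)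
    rw [Metric.uniformContinuous_iff] at h1
    obtain ⟨η, hη, h2⟩ := h1 ε hε
    exact ⟨η / 2, by positivity,
      fun x y hxy => le_of_lt (h2 (lt_of_le_of_lt hxy (by linarith)))⟩
  choose η hη h2 using h
  rcases Nat.eq_zero_or_pos m with hm | hm
  · exact ⟨ε, hε, fun i => absurd i.isLt (by omega)⟩
  · refine ⟨Finset.univ.inf' ⟨⟨0, hm⟩, Finset.mem_univ _⟩ η, ?_, ?_⟩
    · apply (Finset.lt_inf'_iff _).mpr
      exact fun i _ => hη i
    · intro i x y hxy
      exact h2 i x y (hxy.trans (Finset.inf'_le _ (Finset.mem_univ i)))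

/-- Uniform continuity of words of bounded length. -/
lemma ucWord {X : Type*} [MetricSpace X] [CompactSpace X] {m : ℕ} (f : Fin m → X → X)
    (hf : ∀ i, Continuous (f i)) :
    ∀ (L : ℕ) (ε : ℝ), 0 < ε → ∃ η, 0 < η ∧ η ≤ ε ∧
      ∀ v : List (Fin m), v.length ≤ L →
        ∀ x y : X, dist x y ≤ η → dist (applyWord f v x) (applyWord f v y) ≤ ε := by
  intro L
  induction L with
  | zero =>
    intro ε hε
    refine ⟨ε, hε, le_refl ε, ?_⟩
    intro v hv x y h
    have hv0 : v = [] := List.length_eq_zero_iff.mp (Nat.le_zero.mp hv)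
    simpa [hv0, applyWord_nil] using h
  | succ L ih =>
    intro ε hε
    obtain ⟨η₁, hη₁, h1⟩ := uc1 f hf ε hε
    obtain ⟨η, hη, hle, h2⟩ := ih (min η₁ ε) (lt_min hη₁ hε)
    refine ⟨η, hη, hle.trans (min_le_right _ _), ?_⟩
    intro v hv x y hxy
    match v with
    | [] => simpa [applyWord_nil] using hxy.trans (hle.trans (min_le_right _ _))
    | i :: v' =>
      have hv' : v'.length ≤ L := by simp only [List.length_cons] at hv; omega
      have hA : dist (applyWord f v' x) (applyWord f v' y) ≤ min η₁ ε :=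
        h2 v' hv' x y hxy
      rw [applyWord_cons, applyWord_cons]
      exact h1 i _ _ (hA.trans (min_le_left _ _))

/-- A fine-enough chain approximates the exact orbit. -/
lemma expLemma {X : Type*} [MetricSpace X] [CompactSpace X] {m : ℕ} (f : Fin m → X → X)
    (hf : ∀ i, Continuous (f i)) :
    ∀ (L : ℕ) (ε : ℝ), 0 < ε → ∃ ε', 0 < ε' ∧ ε' ≤ ε ∧
      ∀ w : List (Fin m), w.length ≤ L → ∀ c : ℕ → X, IsChainSeq f w ε' c →
        dist (applyWord f w.reverse (c 0)) (c w.length) ≤ ε := by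
  intro L
  induction L with
  | zero =>
    intro ε hε
    refine ⟨ε, hε, le_refl ε, ?_⟩
    intro w hw c _
    have hw0 : w = [] := List.length_eq_zero_iff.mp (Nat.le_zero.mp hw)
    simp [hw0, applyWord_nil, hε.le]
  | succ L ih =>
    intro ε hε
    obtain ⟨η, hη, hηle, hUC⟩ := ucWord f hf L (ε / 2) (by positivity)
    obtain ⟨ε₁, hε₁, hε₁le, hIH⟩ := ih (ε / 2) (by positivity)
    refine ⟨min ε₁ (min η ε), by positivity, (min_le_right _ _).trans (min_le_right _ _), ?_⟩
    intro w hw c hc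
    match w with
    | [] => simp [applyWord_nil, hε.le]
    | i :: w' =>
      have hw' : w'.length ≤ L := by simp only [List.length_cons] at hw; omega
      -- shifted chain
      have hshift : IsChainSeq f w' ε₁ (fun j => c (j + 1)) := by
        intro j hj
        have h0 := hc (j + 1) (by simpa using Nat.succ_lt_succ hj)
        simp only [List.get_eq_getElem, List.getElem_cons_succ] at h0
        simp only [List.get_eq_getElem]
        exact h0.trans (min_le_left _ _)
      have hA : dist (applyWord f w'.reverse (c 1)) (c (w'.length + 1)) ≤ ε / 2 :=
        hIH w' hw' (fun j => c (j + 1)) hshift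
      have hstep : dist (f i (c 0)) (c 1) ≤ η := by
        have h0 := hc 0 (by simp)
        simp only [List.get_eq_getElem, List.getElem_cons_zero] at h0
        exact h0.trans ((min_le_right _ _).trans (min_le_left _ _))
      have hB : dist (applyWord f w'.reverse (f i (c 0))) (applyWord f w'.reverse (c 1)) ≤ ε / 2 :=
        hUC w'.reverse (by simpa using hw') _ _ hstep
      have hrw : applyWord f (i :: w').reverse (c 0) = applyWord f w'.reverse (f i (c 0)) := by
        rw [List.reverse_cons, applyWord_append]
        rfl
      rw [hrw, show (i :: w').length = w'.length + 1 from rfl]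
      calc dist (applyWord f w'.reverse (f i (c 0))) (c (w'.length + 1))
          ≤ dist (applyWord f w'.reverse (f i (c 0))) (applyWord f w'.reverse (c 1))
            + dist (applyWord f w'.reverse (c 1)) (c (w'.length + 1)) := dist_triangle _ _ _
        _ ≤ ε / 2 + ε / 2 := add_le_add hB hA
        _ = ε := by ring

/-- Expanding a `G^k`-chain into a `G`-chain. -/
lemma expandChain {X : Type*} [MetricSpace X] {m : ℕ} (f : Fin m → X → X) {k : ℕ}
    (hk : 0 < k) {ε : ℝ} (hε : 0 ≤ ε) :
    ∀ {q : ℕ} {a b : X}, ChainFrom (powerGens f k) ε a b q → ChainFrom f ε a b (q * k) := by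
  intro q
  induction q with
  | zero =>
    intro a b h
    rw [eq_of_chainFrom_zero h]
    simpa using chainFrom_zero f ε b
  | succ q ih =>
    intro a b h
    rw [show q + 1 = 1 + q by omega] at h
    obtain ⟨mid, h1, h2⟩ := chainFrom_split h
    obtain ⟨W, hW, c, hc, hc0, hc1⟩ := h1
    obtain ⟨u, rfl⟩ := List.length_eq_one_iff.mp hW
    have hstep : dist (powerGens f k u a) mid ≤ ε := by
      have := hc 0 (by simp)
      simpa [hc0, hc1] using this
    have hfirst : ChainFrom f ε a mid k := by
      have := chainFrom_of_applyWord f hε (List.ofFn u) (by simpa using hk)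
        (a := a) (b := mid) (by simpa [powerGens] using hstep)
      simpa using this
    have := chainFrom_trans hfirst (ih h2)
    rw [show k + q * k = (q + 1) * k by ring] at this
    exact this

/-- Compressing a fine `G`-chain of length `q * k` into a `G^k`-chain. -/
lemma compressChain {X : Type*} [MetricSpace X] {m : ℕ} (f : Fin m → X → X) {k : ℕ}
    (hk : 0 < k) {ε ε' : ℝ}
    (hEXP : ∀ w : List (Fin m), w.length ≤ k → ∀ c : ℕ → X, IsChainSeq f w ε' c →
      dist (applyWord f w.reverse (c 0)) (c w.length) ≤ ε) :
    ∀ {q : ℕ} {a b : X}, ChainFrom f ε' a b (q * k) → ChainFrom (powerGens f k) ε a b q := by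
  intro q
  induction q with
  | zero =>
    intro a b h
    have h0 : ChainFrom f ε' a b 0 := by simpa using h
    rw [eq_of_chainFrom_zero h0]
    exact chainFrom_zero _ ε b
  | succ q ih =>
    intro a b h
    rw [show (q + 1) * k = k + q * k by ring] at h
    obtain ⟨mid, h1, h2⟩ := chainFrom_split h
    obtain ⟨w, hw, c, hc, hc0, hck⟩ := h1
    have hdist : dist (applyWord f w.reverse a) mid ≤ ε := by
      have := hEXP w (le_of_eq hw) c hc
      rwa [hc0, hw, hck] at this
    set u : Fin k → Fin m := fun i => w.reverse[(i : ℕ)]'(by simp [hw]) with hu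
    have hofn : List.ofFn u = w.reverse := by
      apply List.ext_getElem
      · simp [hw]
      · intro i h1i h2i
        simp [hu]
    have hpg : powerGens f k u a = applyWord f w.reverse a := by
      rw [powerGens, hofn]
    have hfirst : ChainFrom (powerGens f k) ε a mid 1 := by
      refine ⟨[u], rfl, fun j => if j = 0 then a else mid, ?_, by simp, by simp⟩
      intro j hj
      simp only [List.length_cons, List.length_nil] at hj
      have hj0 : j = 0 := by omega
      subst hj0
      simpa [hpg] using hdist
    have := chainFrom_trans hfirst (ih h2)
    rw [show 1 + q = q + 1 by ring] at this
    exact this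

/-- The defining set for `mTime`. -/
lemma mTime_upward {X : Type*} [MetricSpace X] {ι : Type*} {f : ι → X → X} {ε δ : ℝ} {x : X}
    {N N' : ℕ} (hN : N ∈ {N : ℕ | ∀ n : ℕ, N ≤ n → ∀ y : X, ∃ z : X, dist z x < δ ∧ ChainFrom f ε z y n})
    (h : N ≤ N') :
    N' ∈ {N : ℕ | ∀ n : ℕ, N ≤ n → ∀ y : X, ∃ z : X, dist z x < δ ∧ ChainFrom f ε z y n} :=
  fun n hn y => hN n (h.trans hn) y

theorem stmt12' {X : Type*} [MetricSpace X] [CompactSpace X] {m : ℕ}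
    (f : Fin m → X → X) (hf : ∀ i, Continuous (f i)) (hcm : ChainMixing f)
    (k : ℕ) (hk : 0 < k) :
    ChainMixing (powerGens f k) ∧
      ∀ ε δ : ℝ, 0 < ε → ε < δ →
        (1 / (k : ℝ)) * (mTimeSup f ε δ : ℝ) ≤ (mTimeSup (powerGens f k) ε δ : ℝ) ∧
          ∃ ε' : ℝ, 0 < ε' ∧ ε' ≤ ε ∧ mTimeSup (powerGens f k) ε δ ≤ mTimeSup f ε' δ := by
  have hCMk : ChainMixing (powerGens f k) := by
    intro ε hε
    obtain ⟨ε', hε'pos, hε'le, hEXP⟩ := expLemma f hf k ε hε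
    obtain ⟨N, hN, hchain⟩ := hcm ε' hε'pos
    refine ⟨N, hN, ?_⟩
    intro a b n hn
    have hnk : N ≤ n * k := hn.trans (Nat.le_mul_of_pos_right n hk)
    exact compressChain f hk hEXP (hchain a b (n * k) hnk)
  refine ⟨hCMk, ?_⟩
  intro ε δ hε hεδ
  have hδ : 0 < δ := hε.trans hεδ
  constructor
  · -- (1): (1/k) * mTimeSup f ≤ mTimeSup G^k
    rcases isEmpty_or_nonempty X with hX | hX
    · simp only [mTimeSup, Set.range_eq_empty, csSup_empty, Nat.bot_eq_zero, Nat.cast_zero,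
        mul_zero, le_refl]
    · set M := mTimeSup (powerGens f k) ε δ with hMdef
      obtain ⟨N₁, hN₁pos, hchain₁⟩ := hCMk ε hε
      have hN₁mem : ∀ x : X, N₁ ∈ {N : ℕ | ∀ n : ℕ, N ≤ n → ∀ y : X,
          ∃ z : X, dist z x < δ ∧ ChainFrom (powerGens f k) ε z y n} :=
        fun x n hn y => ⟨x, by simpa using hδ, hchain₁ x y n hn⟩
      have hbdd : ∀ x : X, mTime (powerGens f k) ε δ x ≤ N₁ :=
        fun x => Nat.sInf_le (hN₁mem x)
      have hbddA : BddAbove (Set.range fun x : X => mTime (powerGens f k) ε δ x) := by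
        refine ⟨N₁, ?_⟩
        rintro t ⟨x, rfl⟩
        exact hbdd x
      have hle : ∀ x : X, mTime (powerGens f k) ε δ x ≤ M :=
        fun x => le_csSup hbddA (Set.mem_range_self x)
      have hMmem : ∀ x : X, M ∈ {N : ℕ | ∀ n : ℕ, N ≤ n → ∀ y : X,
          ∃ z : X, dist z x < δ ∧ ChainFrom (powerGens f k) ε z y n} := by
        intro x
        have hne : Set.Nonempty {N : ℕ | ∀ n : ℕ, N ≤ n → ∀ y : X,
            ∃ z : X, dist z x < δ ∧ ChainFrom (powerGens f k) ε z y n} := ⟨N₁, hN₁mem x⟩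
        exact mTime_upward (Nat.sInf_mem hne) (hle x)
      obtain ⟨N₀, hN₀pos, hchain₀⟩ := hcm ε hε
      have hkey : ∀ x : X, mTime f ε δ x ≤ k * M := by
        intro x
        apply Nat.sInf_le
        intro n hn y
        have hdm : k * (n / k) + n % k = n := Nat.div_add_mod n k
        have hr : n % k < k := Nat.mod_lt n hk
        have hq : M ≤ n / k := (Nat.le_div_iff_mul_le hk).mpr (by rw [Nat.mul_comm]; exact hn)
        obtain ⟨v, hv⟩ : ∃ v : X, ChainFrom f ε v y (n % k) := by
          have hch := hchain₀ y y (N₀ + n % k) (by omega)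
          exact chainFrom_suffix (by omega) hch
        obtain ⟨z, hz, hzc⟩ := hMmem x (n / k) hq v
        refine ⟨z, hz, ?_⟩
        have hcomb := chainFrom_trans (expandChain f hk hε.le hzc) hv
        rw [show n / k * k + n % k = n by rw [Nat.mul_comm]; exact hdm] at hcomb
        exact hcomb
      have hsup : mTimeSup f ε δ ≤ k * M := by
        apply csSup_le (Set.range_nonempty _)
        rintro t ⟨x, rfl⟩
        exact hkey x
      have hcast : (mTimeSup f ε δ : ℝ) ≤ (k : ℝ) * (M : ℝ) := by exact_mod_cast hsup
      have hkpos : (0 : ℝ) < (k : ℝ) := by exact_mod_cast hk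
      rw [one_div, inv_mul_le_iff₀ hkpos]
      exact hcast
  · -- (2)
    obtain ⟨ε', hε'pos, hε'le, hEXP⟩ := expLemma f hf k ε hε
    refine ⟨ε', hε'pos, hε'le, ?_⟩
    rcases isEmpty_or_nonempty X with hX | hX
    · simp only [mTimeSup, Set.range_eq_empty, csSup_empty, le_refl]
    · set M' := mTimeSup f ε' δ with hM'def
      obtain ⟨N₂, hN₂pos, hchain₂⟩ := hcm ε' hε'pos
      have hN₂mem : ∀ x : X, N₂ ∈ {N : ℕ | ∀ n : ℕ, N ≤ n → ∀ y : X,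
          ∃ z : X, dist z x < δ ∧ ChainFrom f ε' z y n} :=
        fun x n hn y => ⟨x, by simpa using hδ, hchain₂ x y n hn⟩
      have hbdd : ∀ x : X, mTime f ε' δ x ≤ N₂ := fun x => Nat.sInf_le (hN₂mem x)
      have hbddA : BddAbove (Set.range fun x : X => mTime f ε' δ x) := by
        refine ⟨N₂, ?_⟩
        rintro t ⟨x, rfl⟩
        exact hbdd x
      have hle : ∀ x : X, mTime f ε' δ x ≤ M' :=
        fun x => le_csSup hbddA (Set.mem_range_self x)
      have hM'mem : ∀ x : X, M' ∈ {N : ℕ | ∀ n : ℕ, N ≤ n → ∀ y : X,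
          ∃ z : X, dist z x < δ ∧ ChainFrom f ε' z y n} := by
        intro x
        have hne : Set.Nonempty {N : ℕ | ∀ n : ℕ, N ≤ n → ∀ y : X,
            ∃ z : X, dist z x < δ ∧ ChainFrom f ε' z y n} := ⟨N₂, hN₂mem x⟩
        exact mTime_upward (Nat.sInf_mem hne) (hle x)
      have hkey : ∀ x : X, mTime (powerGens f k) ε δ x ≤ M' := by
        intro x
        apply Nat.sInf_le
        intro n hn y
        obtain ⟨z, hz, hzc⟩ := hM'mem x (n * k) (hn.trans (Nat.le_mul_of_pos_right n hk)) y
        exact ⟨z, hz, compressChain f hk hEXP hzc⟩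
      apply csSup_le (Set.range_nonempty _)
      rintro t ⟨x, rfl⟩
      exact hkey x

theorem stmt12 {X : Type*} [MetricSpace X] [CompactSpace X] {m : ℕ}
    (f : Fin m → X → X) (hf : ∀ i, Continuous (f i)) (hcm : ChainMixing f)
    (k : ℕ) (hk : 0 < k) :
    ChainMixing (powerGens f k) ∧
      ∀ ε δ : ℝ, 0 < ε → ε < δ →
        (1 / (k : ℝ)) * (mTimeSup f ε δ : ℝ) ≤ (mTimeSup (powerGens f k) ε δ : ℝ) ∧
          ∃ ε' : ℝ, 0 < ε' ∧ ε' ≤ ε ∧ mTimeSup (powerGens f k) ε δ ≤ mTimeSup f ε' δ :=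
  stmt12' f hf hcm k hk
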